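/- Let G be a block graph consisting of an edge K₂ = {u₁, u₂}, where at each u_i cliques K_{m^i_1}, ..., K_{m^i_{k_i}} of orders m^i_j ≥ 3 are coalesced (sharing only the vertex u_i). Then G is nonsingular. -/

import Mathlib

open scoped Classical

/-- The block graph consisting of an edge `K₂` on vertices `0, 1`, where at vertex `i`
the cliques `K_{mf i j}` (`j < kf i`) are coalesced, each contributing `mf i j - 1`
new vertices. -/
def edgeCliquesGraph (kf : Fin 2 → ℕ) (mf : ∀ i, Fin (kf i) → ℕ) :
    SimpleGraph (Fin 2 ⊕ Σ i : Fin 2, Σ j : Fin (kf i), Fin (mf i j - 1)) :=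
  SimpleGraph.fromRel fun x y =>
    match x, y with
    | .inl _, .inl _ => True
    | .inl i, .inr p => i = p.1
    | .inr p, .inr q => p.1 = q.1 ∧ (p.2.1 : ℕ) = (q.2.1 : ℕ)
    | _, _ => False

/-- Determinant of the adjacency matrix of a graph. -/
noncomputable def gdet {V : Type} [Fintype V] (G : SimpleGraph V) : ℝ :=
  Matrix.det (Matrix.of fun i j : V => if G.Adj i j then (1 : ℝ) else 0)

section Aux

variable (kf : Fin 2 → ℕ) (mf : ∀ i, Fin (kf i) → ℕ)

lemma adj_ll (i i' : Fin 2) : (edgeCliquesGraph kf mf).Adj (.inl i) (.inl i') ↔ i ≠ i' := by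
  simp [edgeCliquesGraph, SimpleGraph.fromRel_adj]

lemma adj_lr (i i' : Fin 2) (j : Fin (kf i')) (t : Fin (mf i' j - 1)) :
    (edgeCliquesGraph kf mf).Adj (.inl i) (.inr ⟨i', j, t⟩) ↔ i = i' := by
  simp [edgeCliquesGraph, SimpleGraph.fromRel_adj]

lemma adj_rl (i i' : Fin 2) (j : Fin (kf i')) (t : Fin (mf i' j - 1)) :
    (edgeCliquesGraph kf mf).Adj (.inr ⟨i', j, t⟩) (.inl i) ↔ i = i' := by
  rw [SimpleGraph.adj_comm]; exact adj_lr kf mf i i' j t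

lemma adj_rr (i i' : Fin 2) (j : Fin (kf i)) (t : Fin (mf i j - 1)) (j' : Fin (kf i')) (t' : Fin (mf i' j' - 1)) :
    (edgeCliquesGraph kf mf).Adj (.inr ⟨i, j, t⟩) (.inr ⟨i', j', t'⟩) ↔
      (⟨i,j,t⟩ : Σ i : Fin 2, Σ j : Fin (kf i), Fin (mf i j - 1)) ≠ ⟨i',j',t'⟩ ∧ i = i' ∧ (j : ℕ) = (j' : ℕ) := by
  simp [edgeCliquesGraph, SimpleGraph.fromRel_adj]
  tauto

end Aux

/-- A block graph consisting of an edge with cliques of order at least 3 coalesced at each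
of its two endpoints is nonsingular. -/
theorem stmt_18 (kf : Fin 2 → ℕ) (mf : ∀ i, Fin (kf i) → ℕ)
    (hk : ∀ i, 1 ≤ kf i) (hm : ∀ i j, 3 ≤ mf i j) :
    gdet (edgeCliquesGraph kf mf) ≠ 0 := by
  intro hdet
  unfold gdet at hdet
  obtain ⟨x, hx0, hx⟩ :=
    (Matrix.exists_mulVec_eq_zero_iff
      (M := Matrix.of fun i j => if (edgeCliquesGraph kf mf).Adj i j then (1:ℝ) else 0)).mpr (by convert hdet)
  set u : Fin 2 → ℝ := fun i => x (Sum.inl i) with hu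
  set c : ∀ i : Fin 2, ∀ j : Fin (kf i), Fin (mf i j - 1) → ℝ :=
    fun i j t => x (Sum.inr ⟨i, j, t⟩) with hc
  set S : ∀ i : Fin 2, Fin (kf i) → ℝ := fun i j => ∑ t, c i j t with hS
  have heq : ∀ v, ∑ w, (if (edgeCliquesGraph kf mf).Adj v w then (1:ℝ) else 0) * x w = 0 := by
    intro v
    have h := congrFun hx v
    simpa [Matrix.mulVec, dotProduct] using h
  -- clique equations
  have hclique : ∀ i (j : Fin (kf i)) (t : Fin (mf i j - 1)),
      u i + (S i j - c i j t) = 0 := by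
    intro i j t
    have h := heq (Sum.inr ⟨i, j, t⟩)
    rw [Fintype.sum_sum_type, ← Finset.univ_sigma_univ, Finset.sum_sigma] at h
    have h1 : ∑ i' : Fin 2,
        (if (edgeCliquesGraph kf mf).Adj (.inr ⟨i,j,t⟩) (.inl i') then (1:ℝ) else 0) * x (.inl i')
        = u i := by
      simp only [adj_rl, ite_mul, one_mul, zero_mul]
      simp [Finset.sum_ite_eq]
      rfl
    have h2 : ∑ i' : Fin 2, ∑ p : Σ j' : Fin (kf i'), Fin (mf i' j' - 1),
        (if (edgeCliquesGraph kf mf).Adj (.inr ⟨i,j,t⟩) (.inr ⟨i', p⟩) then (1:ℝ) else 0) * x (.inr ⟨i', p⟩)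
        = S i j - c i j t := by
      rw [Finset.sum_eq_single i]
      · rw [← Finset.univ_sigma_univ, Finset.sum_sigma, Finset.sum_eq_single j]
        · have key : ∀ t' : Fin (mf i j - 1),
              (if (edgeCliquesGraph kf mf).Adj (.inr ⟨i,j,t⟩) (.inr ⟨i, j, t'⟩) then (1:ℝ) else 0) * x (.inr ⟨i, j, t'⟩)
              = c i j t' - (if t' = t then c i j t' else 0) := by
            intro t'
            by_cases h : t' = t
            · subst h; simp [adj_rr]
            · rw [if_pos, one_mul, if_neg h, sub_zero]
              rw [adj_rr]
              refine ⟨?_, rfl, rfl⟩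
              simp [Ne, Sigma.mk.inj_iff]
              exact fun ht => h ht.symm
          rw [Finset.sum_congr rfl (fun t' _ => key t'), Finset.sum_sub_distrib]
          congr 1
          simp [Finset.sum_ite_eq']
        · intro j' _ hj'
          apply Finset.sum_eq_zero
          intro t' _
          rw [if_neg, zero_mul]
          rw [adj_rr]
          rintro ⟨-, -, hj⟩
          exact hj' (Fin.ext hj.symm)
        · simp
      · intro i' _ hi'
        apply Finset.sum_eq_zero
        intro p _
        obtain ⟨j', t'⟩ := p
        rw [if_neg, zero_mul]
        rw [adj_rr]
        rintro ⟨-, hi, -⟩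
        exact hi' hi.symm
      · simp
    rw [h1, h2] at h
    exact h
  -- hub equations
  have hhub : ∀ i : Fin 2, (u 0 + u 1 - u i) + (∑ j, S i j) = 0 := by
    intro i
    have h := heq (Sum.inl i)
    rw [Fintype.sum_sum_type, ← Finset.univ_sigma_univ, Finset.sum_sigma] at h
    have h1 : ∑ i' : Fin 2,
        (if (edgeCliquesGraph kf mf).Adj (.inl i) (.inl i') then (1:ℝ) else 0) * x (.inl i')
        = u 0 + u 1 - u i := by
      have key : ∀ i' : Fin 2,
          (if (edgeCliquesGraph kf mf).Adj (.inl i) (.inl i') then (1:ℝ) else 0) * x (.inl i')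
          = u i' - (if i' = i then u i' else 0) := by
        intro i'
        by_cases h : i' = i
        · subst h; simp [adj_ll]
        · rw [if_pos, one_mul, if_neg h, sub_zero]
          rw [adj_ll]
          exact fun hi => h hi.symm
      rw [Finset.sum_congr rfl (fun i' _ => key i'), Finset.sum_sub_distrib]
      rw [Fin.sum_univ_two]
      simp [Finset.sum_ite_eq']
    have h2 : ∑ i' : Fin 2, ∑ p : Σ j' : Fin (kf i'), Fin (mf i' j' - 1),
        (if (edgeCliquesGraph kf mf).Adj (.inl i) (.inr ⟨i', p⟩) then (1:ℝ) else 0) * x (.inr ⟨i', p⟩)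
        = ∑ j, S i j := by
      rw [Finset.sum_eq_single i]
      · rw [← Finset.univ_sigma_univ, Finset.sum_sigma]
        apply Finset.sum_congr rfl
        intro j' _
        apply Finset.sum_congr rfl
        intro t' _
        rw [if_pos, one_mul]
        rw [adj_lr]
      · intro i' _ hi'
        apply Finset.sum_eq_zero
        intro p _
        obtain ⟨j', t'⟩ := p
        rw [if_neg, zero_mul]
        rw [adj_lr]
        exact fun hi => hi' hi.symm
      · simp
    rw [h1, h2] at h
    exact h
  -- solve
  set nn : ∀ i : Fin 2, Fin (kf i) → ℝ := fun i j => ((mf i j - 1 : ℕ) : ℝ) with hnn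
  have hnn2 : ∀ i j, (2:ℝ) ≤ nn i j := by
    intro i j
    have h3 := hm i j
    have h4 : (2:ℕ) ≤ mf i j - 1 := by omega
    show (2:ℝ) ≤ ((mf i j - 1 : ℕ) : ℝ)
    exact_mod_cast h4
  set r : ∀ i : Fin 2, Fin (kf i) → ℝ := fun i j => nn i j / (nn i j - 1) with hr
  have hr1 : ∀ i j, 1 < r i j := by
    intro i j
    rw [hr]
    rw [one_lt_div (by linarith [hnn2 i j])]
    linarith
  have hSval : ∀ i j, S i j = -(r i j) * u i := by
    intro i j
    have hsum : S i j = nn i j * (u i + S i j) := by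
      have : ∀ t : Fin (mf i j - 1), c i j t = u i + S i j := by
        intro t; have := hclique i j t; linarith
      calc S i j = ∑ t : Fin (mf i j - 1), c i j t := rfl
        _ = ∑ _t : Fin (mf i j - 1), (u i + S i j) := Finset.sum_congr rfl fun t _ => this t
        _ = nn i j * (u i + S i j) := by
            rw [Finset.sum_const, Finset.card_univ, Fintype.card_fin, nsmul_eq_mul, hnn]
    have hne : nn i j - 1 ≠ 0 := by linarith [hnn2 i j]
    rw [hr]
    field_simp
    linarith [hsum]
  set T : Fin 2 → ℝ := fun i => ∑ j, r i j with hT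
  have hT1 : ∀ i, 1 < T i := by
    intro i
    have j0 : Fin (kf i) := ⟨0, hk i⟩
    calc (1:ℝ) < r i j0 := hr1 i j0
      _ ≤ T i := Finset.single_le_sum (fun j _ => le_of_lt (lt_trans one_pos (hr1 i j))) (Finset.mem_univ j0)
  have hub' : ∀ i : Fin 2, u 0 + u 1 - u i = T i * u i := by
    intro i
    have h := hhub i
    have : ∑ j, S i j = -(T i * u i) := by
      have h5 : T i * u i = ∑ j, r i j * u i := by rw [hT]; exact Finset.sum_mul _ _ _
      rw [h5, ← Finset.sum_neg_distrib]
      exact Finset.sum_congr rfl fun j _ => by rw [hSval i j]; ring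
    linarith [h, this]
  have h0 : u 1 = T 0 * u 0 := by have := hub' 0; linarith
  have h1 : u 0 = T 1 * u 1 := by have := hub' 1; linarith
  have hu0 : u 0 = 0 := by
    have : u 0 * (1 - T 1 * T 0) = 0 := by linear_combination h1 + T 1 * h0
    rcases mul_eq_zero.1 this with h | h
    · exact h
    · exfalso; nlinarith [hT1 0, hT1 1]
  have hu1 : u 1 = 0 := by rw [h0, hu0, mul_zero]
  have hui : ∀ i, u i = 0 := by intro i; fin_cases i <;> assumption
  have hSz : ∀ i j, S i j = 0 := by intro i j; rw [hSval, hui, mul_zero]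
  have hcz : ∀ i j t, c i j t = 0 := by
    intro i j t
    have := hclique i j t
    rw [hui, hSz] at this
    linarith
  apply hx0
  funext v
  rcases v with i | ⟨i, j, t⟩
  · exact hui i
  · exact hcz i j t
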